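/- arXiv:1711.08757 — 5 statements merged into one kernel-verified Lean document; each statement's English description precedes it below -/
import Mathlib

section
/- Refined expander mixing lemma. Let n, D be positive integers and λ ≥ 0 a real number. Let A be an n×n real matrix with entries in {0,1} that is D-biregular and has second singular value at most λ. Then for all subsets S, T of Fin n, |E(S,T) − D·|S|·|T|/n| ≤ λ·√(|S|·|T|·(1 − |S|/n)·(1 − |T|/n)). -/
/-- Refined expander mixing lemma: for a 0/1, D-biregular n×n matrix `A` with second
singular value at most `lam`, and subsets S, T of `Fin n`,
`|E(S,T) − D·|S|·|T|/n| ≤ lam·√(|S|·|T|·(1 − |S|/n)·(1 − |T|/n))`. -/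
theorem refined_expander_mixing_lemma
    (n D : ℕ) (hn : 0 < n) (hD : 0 < D) (lam : ℝ) (hlam : 0 ≤ lam)
    (A : Matrix (Fin n) (Fin n) ℝ)
    (hA01 : ∀ v u, A v u = 0 ∨ A v u = 1)
    (hrow : ∀ v, ∑ u, A v u = D)
    (hcol : ∀ u, ∑ v, A v u = D)
    (hsv : ∀ x : Fin n → ℝ, (∑ i, x i) = 0 →
      Real.sqrt (∑ i, (A.mulVec x i) ^ 2) ≤ lam * Real.sqrt (∑ i, (x i) ^ 2))
    (S T : Finset (Fin n)) :
    |(∑ v ∈ T, ∑ u ∈ S, A v u) - (D : ℝ) * S.card * T.card / n| ≤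
      lam * Real.sqrt ((S.card : ℝ) * T.card *
        (1 - (S.card : ℝ) / n) * (1 - (T.card : ℝ) / n)) := by
  have hn' : (n : ℝ) ≠ 0 := Nat.cast_ne_zero.mpr hn.ne'
  set s : ℝ := (S.card : ℝ) / n with hs
  set t : ℝ := (T.card : ℝ) / n with ht
  set x : Fin n → ℝ := fun u => (if u ∈ S then (1:ℝ) else 0) - s with hx
  set y : Fin n → ℝ := fun v => (if v ∈ T then (1:ℝ) else 0) - t with hy
  have hSsum : ∑ u, (if u ∈ S then (1:ℝ) else 0) = S.card := by simp
  have hTsum : ∑ v, (if v ∈ T then (1:ℝ) else 0) = T.card := by simp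
  have hxsum : ∑ u, x u = 0 := by
    simp only [hx, Finset.sum_sub_distrib, hSsum, Finset.sum_const, Finset.card_univ,
      Fintype.card_fin, nsmul_eq_mul, hs]
    field_simp
    ring
  have hysum : ∑ v, y v = 0 := by
    simp only [hy, Finset.sum_sub_distrib, hTsum, Finset.sum_const, Finset.card_univ,
      Fintype.card_fin, nsmul_eq_mul, ht]
    field_simp
    ring
  -- ∑ x² = |S|(1 - s)
  have hx2 : ∑ u, (x u) ^ 2 = (S.card : ℝ) * (1 - s) := by
    have h1 : ∀ u, (x u) ^ 2 = x u * (if u ∈ S then (1:ℝ) else 0) - s * x u := by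
      intro u; by_cases h : u ∈ S <;> simp [hx, h] <;> ring
    rw [Finset.sum_congr rfl fun u _ => h1 u, Finset.sum_sub_distrib,
      ← Finset.mul_sum, hxsum, mul_zero, sub_zero]
    have : ∀ u, x u * (if u ∈ S then (1:ℝ) else 0) = if u ∈ S then (1 - s) else 0 := by
      intro u; by_cases h : u ∈ S <;> simp [hx, h]
    rw [Finset.sum_congr rfl fun u _ => this u]
    simp [mul_comm]
    ring
  have hy2 : ∑ v, (y v) ^ 2 = (T.card : ℝ) * (1 - t) := by
    have h1 : ∀ v, (y v) ^ 2 = y v * (if v ∈ T then (1:ℝ) else 0) - t * y v := by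
      intro v; by_cases h : v ∈ T <;> simp [hy, h] <;> ring
    rw [Finset.sum_congr rfl fun v _ => h1 v, Finset.sum_sub_distrib,
      ← Finset.mul_sum, hysum, mul_zero, sub_zero]
    have : ∀ v, y v * (if v ∈ T then (1:ℝ) else 0) = if v ∈ T then (1 - t) else 0 := by
      intro v; by_cases h : v ∈ T <;> simp [hy, h]
    rw [Finset.sum_congr rfl fun v _ => this v]
    simp [mul_comm]
    ring
  -- mulVec formula
  have hAx : ∀ v, A.mulVec x v = (∑ u ∈ S, A v u) - s * D := by
    intro v
    have : A.mulVec x v = ∑ u, (A v u * (if u ∈ S then (1:ℝ) else 0) - s * A v u) := by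
      simp only [Matrix.mulVec, dotProduct, hx]
      exact Finset.sum_congr rfl fun u _ => by ring
    rw [this, Finset.sum_sub_distrib, ← Finset.mul_sum, hrow]
    congr 1
    simp [mul_ite, mul_one, mul_zero, Finset.sum_ite_mem]
  -- column sum over S
  have hcolS : ∑ v, ∑ u ∈ S, A v u = (D : ℝ) * S.card := by
    exact Finset.sum_comm.trans (by simp [hcol, mul_comm])
  -- inner product identity
  have hinner : ∑ v, y v * A.mulVec x v
      = (∑ v ∈ T, ∑ u ∈ S, A v u) - (D : ℝ) * S.card * T.card / n := by
    have expand : ∀ v, y v * A.mulVec x v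
        = (if v ∈ T then (1:ℝ) else 0) * (∑ u ∈ S, A v u)
          - t * (∑ u ∈ S, A v u)
          - s * D * (if v ∈ T then (1:ℝ) else 0)
          + t * s * D := by
      intro v; rw [hAx v]; simp only [hy]; ring
    rw [Finset.sum_congr rfl fun v _ => expand v]
    rw [Finset.sum_add_distrib, Finset.sum_sub_distrib, Finset.sum_sub_distrib,
      ← Finset.mul_sum, ← Finset.mul_sum, hcolS, hTsum]
    have hTe : ∑ v, (if v ∈ T then (1:ℝ) else 0) * (∑ u ∈ S, A v u)
        = ∑ v ∈ T, ∑ u ∈ S, A v u := by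
      simp [ite_mul, one_mul, zero_mul, Finset.sum_ite_mem]
    rw [hTe]
    simp only [Finset.sum_const, Finset.card_univ, Fintype.card_fin, nsmul_eq_mul, hs, ht]
    field_simp
    ring
  -- Cauchy–Schwarz
  have hcs : |∑ v, y v * A.mulVec x v|
      ≤ Real.sqrt (∑ v, (y v) ^ 2) * Real.sqrt (∑ v, (A.mulVec x v) ^ 2) := by
    have sq := Finset.sum_mul_sq_le_sq_mul_sq Finset.univ y (A.mulVec x)
    have h1 : |∑ v, y v * A.mulVec x v| =
        Real.sqrt ((∑ v, y v * A.mulVec x v) ^ 2) := (Real.sqrt_sq_eq_abs _).symm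
    rw [h1, ← Real.sqrt_mul (by positivity)]
    exact Real.sqrt_le_sqrt sq
  have hAxb := hsv x hxsum
  have hy2nn : (0:ℝ) ≤ ∑ v, (y v) ^ 2 := by positivity
  have key : |∑ v, y v * A.mulVec x v|
      ≤ lam * (Real.sqrt (∑ v, (y v) ^ 2) * Real.sqrt (∑ u, (x u) ^ 2)) := by
    calc |∑ v, y v * A.mulVec x v|
        ≤ Real.sqrt (∑ v, (y v) ^ 2) * Real.sqrt (∑ v, (A.mulVec x v) ^ 2) := hcs
      _ ≤ Real.sqrt (∑ v, (y v) ^ 2) * (lam * Real.sqrt (∑ u, (x u) ^ 2)) := by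
          exact mul_le_mul_of_nonneg_left hAxb (Real.sqrt_nonneg _)
      _ = lam * (Real.sqrt (∑ v, (y v) ^ 2) * Real.sqrt (∑ u, (x u) ^ 2)) := by ring
  rw [← hinner]
  refine key.trans (le_of_eq ?_)
  congr 1
  have hSn : (S.card : ℝ) ≤ n := by
    exact_mod_cast (S.card_le_univ.trans_eq (by simp))
  have hTn : (T.card : ℝ) ≤ n := by
    exact_mod_cast (T.card_le_univ.trans_eq (by simp))
  have hs1 : 0 ≤ 1 - s := by
    rw [hs, sub_nonneg, div_le_one (by positivity)]; exact hSn
  have ht1 : 0 ≤ 1 - t := by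
    rw [ht, sub_nonneg, div_le_one (by positivity)]; exact hTn
  rw [hy2, hx2, ← Real.sqrt_mul (by positivity)]
  congr 1
  ring
end

section
/- Theorem 2 of the paper (Mixing in Deep Expander Networks, general version). Let n be a positive integer, and for i = 1,…,t let Aᵢ be an n×n real matrix with entries in {0,1} that is Dᵢ-biregular and has second singular value at most λᵢ. Then for all subsets S, T of Fin n, the number of paths from S to T through the t-layer network satisfies |∑_{v ∈ T} ∑_{u ∈ S} (A_t ⋯ A_1) v u − (∏ᵢ Dᵢ)·|S|·|T|/n| ≤ (∏ᵢ λᵢ)·√(|S|·|T|). -/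
/-- The product of the layer matrices `A t * A (t-1) * ⋯ * A 1` of a deep network
(layers indexed `1, …, t`). -/
def layerProd {n : ℕ} (A : ℕ → Matrix (Fin n) (Fin n) ℝ) : ℕ → Matrix (Fin n) (Fin n) ℝ
  | 0 => 1
  | k + 1 => A (k + 1) * layerProd A k

/-- Key induction: the layer product preserves the zero-sum property and contracts
the Euclidean norm of zero-sum vectors by the product of the `lam i`. -/
lemma layerProd_key {n t : ℕ}
    (A : ℕ → Matrix (Fin n) (Fin n) ℝ) (D : ℕ → ℕ) (lam : ℕ → ℝ)
    (hlam : ∀ i, 1 ≤ i → i ≤ t → 0 ≤ lam i)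
    (hcol : ∀ i, 1 ≤ i → i ≤ t → ∀ u, ∑ v, A i v u = D i)
    (hsv : ∀ i, 1 ≤ i → i ≤ t → ∀ x : Fin n → ℝ, (∑ j, x j) = 0 →
      Real.sqrt (∑ j, ((A i).mulVec x j) ^ 2) ≤ lam i * Real.sqrt (∑ j, (x j) ^ 2)) :
    ∀ k, k ≤ t → ∀ x : Fin n → ℝ, (∑ j, x j) = 0 →
      (∑ j, (layerProd A k).mulVec x j = 0) ∧
      Real.sqrt (∑ j, ((layerProd A k).mulVec x j) ^ 2) ≤
        (∏ i ∈ Finset.Icc 1 k, lam i) * Real.sqrt (∑ j, (x j) ^ 2) := by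
  intro k
  induction k with
  | zero =>
    intro _ x hx
    simp [layerProd, Matrix.one_mulVec, hx]
  | succ k ih =>
    intro hk x hx
    have hk' : k ≤ t := Nat.le_of_succ_le hk
    obtain ⟨ih1, ih2⟩ := ih hk' x hx
    set y := (layerProd A k).mulVec x with hy
    have hmv : (layerProd A (k+1)).mulVec x = (A (k+1)).mulVec y := by
      rw [layerProd, ← Matrix.mulVec_mulVec]
    have h1 : ∑ j, (A (k+1)).mulVec y j = 0 := by
      simp only [Matrix.mulVec, dotProduct]
      rw [Finset.sum_comm]
      have : ∀ u, ∑ v, A (k+1) v u * y u = (D (k+1) : ℝ) * y u := by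
        intro u
        rw [← Finset.sum_mul, hcol (k+1) (Nat.le_add_left 1 k) hk u]
      simp_rw [this, ← Finset.mul_sum, ih1, mul_zero]
    constructor
    · rw [hmv]; exact h1
    · rw [hmv]
      calc Real.sqrt (∑ j, ((A (k+1)).mulVec y j) ^ 2)
          ≤ lam (k+1) * Real.sqrt (∑ j, (y j) ^ 2) :=
            hsv (k+1) (Nat.le_add_left 1 k) hk y ih1
        _ ≤ lam (k+1) * ((∏ i ∈ Finset.Icc 1 k, lam i) * Real.sqrt (∑ j, (x j) ^ 2)) := by
            apply mul_le_mul_of_nonneg_left ih2 (hlam (k+1) (Nat.le_add_left 1 k) hk)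
        _ = (∏ i ∈ Finset.Icc 1 (k+1), lam i) * Real.sqrt (∑ j, (x j) ^ 2) := by
            rw [Finset.prod_Icc_succ_top (Nat.le_add_left 1 k)]
            ring

/-- The layer product maps constant vectors to constant vectors, scaled by `∏ D i`. -/
lemma layerProd_const {n t : ℕ}
    (A : ℕ → Matrix (Fin n) (Fin n) ℝ) (D : ℕ → ℕ)
    (hrow : ∀ i, 1 ≤ i → i ≤ t → ∀ v, ∑ u, A i v u = D i) (c : ℝ) :
    ∀ k, k ≤ t → (layerProd A k).mulVec (fun _ => c) =
      fun _ => (∏ i ∈ Finset.Icc 1 k, (D i : ℝ)) * c := by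
  intro k
  induction k with
  | zero => intro _; simp [layerProd, Matrix.one_mulVec]
  | succ k ih =>
    intro hk
    have hk' : k ≤ t := Nat.le_of_succ_le hk
    rw [layerProd, ← Matrix.mulVec_mulVec, ih hk']
    funext v
    simp only [Matrix.mulVec, dotProduct]
    rw [← Finset.sum_mul, hrow (k+1) (Nat.le_add_left 1 k) hk v,
      Finset.prod_Icc_succ_top (Nat.le_add_left 1 k)]
    ring

/-- Square-sum of a centered indicator vector is at most the set's cardinality. -/
lemma ind_center_sq_sum_le {n : ℕ} (hn : 0 < n) (S : Finset (Fin n)) :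
    ∑ u : Fin n, ((if u ∈ S then (1:ℝ) else 0) - S.card / n) ^ 2 ≤ S.card := by
  have hnR : (0:ℝ) < n := by exact_mod_cast hn
  have h1 : ∑ u : Fin n, (if u ∈ S then (1:ℝ) else 0) = S.card := by
    simp [Finset.sum_ite_mem, Finset.univ_inter]
  have h2 : ∑ u : Fin n, (if u ∈ S then (1:ℝ) else 0) ^ 2 = S.card := by
    have : ∀ u : Fin n, (if u ∈ S then (1:ℝ) else 0) ^ 2 = (if u ∈ S then (1:ℝ) else 0) := by
      intro u; by_cases h : u ∈ S <;> simp [h]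
    simp_rw [this]; exact h1
  have expand : ∑ u : Fin n, ((if u ∈ S then (1:ℝ) else 0) - S.card / n) ^ 2
      = (∑ u : Fin n, (if u ∈ S then (1:ℝ) else 0) ^ 2)
        - 2 * (S.card / n) * (∑ u : Fin n, (if u ∈ S then (1:ℝ) else 0))
        + n * (S.card / n) ^ 2 := by
    rw [Finset.sum_congr rfl (fun u _ => by ring :
      ∀ u ∈ Finset.univ, ((if u ∈ S then (1:ℝ) else 0) - S.card / n) ^ 2 =
        (if u ∈ S then (1:ℝ) else 0) ^ 2
        - 2 * (S.card / n) * (if u ∈ S then (1:ℝ) else 0) + (S.card / n) ^ 2)]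
    rw [Finset.sum_add_distrib, Finset.sum_sub_distrib, ← Finset.mul_sum,
      Finset.sum_const, Finset.card_univ, Fintype.card_fin, nsmul_eq_mul]
  rw [expand, h1, h2]
  have : (S.card:ℝ) - 2 * (S.card / n) * S.card + n * (S.card / n)^2
      = S.card - S.card^2 / n := by field_simp; ring
  rw [this]
  nlinarith [div_nonneg (sq_nonneg ((S.card:ℝ))) hnR.le]

/-- Theorem 2 of the paper (Mixing in Deep Expander Networks, general version): if each
layer matrix `A i` (i = 1,…,t) is a 0/1, `D i`-biregular n×n matrix with second
singular value at most `lam i`, then for all subsets S, T of `Fin n`, the number of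
paths from S to T through the t-layer network satisfies
`|∑_{v ∈ T} ∑_{u ∈ S} (A_t ⋯ A_1) v u − (∏ᵢ Dᵢ)·|S|·|T|/n| ≤ (∏ᵢ lamᵢ)·√(|S|·|T|)`. -/
theorem mixing_in_deep_expander_networks
    (n t : ℕ) (hn : 0 < n)
    (A : ℕ → Matrix (Fin n) (Fin n) ℝ) (D : ℕ → ℕ) (lam : ℕ → ℝ)
    (hD : ∀ i, 1 ≤ i → i ≤ t → 0 < D i)
    (hlam : ∀ i, 1 ≤ i → i ≤ t → 0 ≤ lam i)
    (hA01 : ∀ i, 1 ≤ i → i ≤ t → ∀ v u, A i v u = 0 ∨ A i v u = 1)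
    (hrow : ∀ i, 1 ≤ i → i ≤ t → ∀ v, ∑ u, A i v u = D i)
    (hcol : ∀ i, 1 ≤ i → i ≤ t → ∀ u, ∑ v, A i v u = D i)
    (hsv : ∀ i, 1 ≤ i → i ≤ t → ∀ x : Fin n → ℝ, (∑ j, x j) = 0 →
      Real.sqrt (∑ j, ((A i).mulVec x j) ^ 2) ≤ lam i * Real.sqrt (∑ j, (x j) ^ 2))
    (S T : Finset (Fin n)) :
    |(∑ v ∈ T, ∑ u ∈ S, layerProd A t v u) -
        (∏ i ∈ Finset.Icc 1 t, (D i : ℝ)) * S.card * T.card / n| ≤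
      (∏ i ∈ Finset.Icc 1 t, lam i) * Real.sqrt ((S.card : ℝ) * T.card) := by
  have hnR : (0:ℝ) < n := by exact_mod_cast hn
  set M := layerProd A t with hM
  set c : ℝ := S.card / n with hc
  set d : ℝ := T.card / n with hd
  set P := ∏ i ∈ Finset.Icc 1 t, lam i with hP
  set PD := ∏ i ∈ Finset.Icc 1 t, (D i : ℝ) with hPD
  have hPnn : 0 ≤ P := Finset.prod_nonneg (fun i hi => by
    rw [Finset.mem_Icc] at hi; exact hlam i hi.1 hi.2)
  set x : Fin n → ℝ := fun u => (if u ∈ S then 1 else 0) - c with hxdef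
  have hx : ∑ u, x u = 0 := by
    simp only [hxdef, Finset.sum_sub_distrib, Finset.sum_ite_mem, Finset.univ_inter,
      Finset.sum_const, Finset.card_univ, Fintype.card_fin, nsmul_eq_mul]
    rw [hc]
    field_simp
    simp
  obtain ⟨hMsum, hMnorm⟩ := layerProd_key A D lam hlam hcol hsv t le_rfl x hx
  have hconst := layerProd_const A D hrow c t le_rfl
  -- decompose M.mulVec of the indicator of S
  have hdecomp : ∀ v, (M.mulVec (fun u => if u ∈ S then (1:ℝ) else 0)) v
      = M.mulVec x v + PD * c := by
    intro v
    have : (fun u => if u ∈ S then (1:ℝ) else 0) = x + (fun _ => c) := by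
      funext u; simp [hxdef]
    rw [this, Matrix.mulVec_add]
    simp [hM, hconst, hPD]
  -- rewrite the double sum
  have hsum_eq : ∑ v ∈ T, ∑ u ∈ S, M v u
      = (∑ v ∈ T, M.mulVec x v) + T.card * (PD * c) := by
    have : ∀ v, ∑ u ∈ S, M v u = M.mulVec (fun u => if u ∈ S then (1:ℝ) else 0) v := by
      intro v
      simp [Matrix.mulVec, dotProduct, mul_ite, Finset.sum_ite_mem,
        Finset.univ_inter]
    rw [Finset.sum_congr rfl (fun v _ => this v)]
    rw [Finset.sum_congr rfl (fun v _ => hdecomp v), Finset.sum_add_distrib,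
      Finset.sum_const, nsmul_eq_mul]
  -- the deviation equals an inner product with the centered indicator of T
  have hdev : ∑ v ∈ T, M.mulVec x v
      = ∑ v, ((if v ∈ T then (1:ℝ) else 0) - d) * M.mulVec x v := by
    have e1 : ∑ v, ((if v ∈ T then (1:ℝ) else 0) - d) * M.mulVec x v
        = (∑ v, (if v ∈ T then (1:ℝ) else 0) * M.mulVec x v)
          - d * ∑ v, M.mulVec x v := by
      rw [Finset.mul_sum, ← Finset.sum_sub_distrib]
      exact Finset.sum_congr rfl (fun v _ => by ring)
    rw [e1, hMsum, mul_zero, sub_zero]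
    simp [ite_mul, Finset.sum_ite_mem, Finset.univ_inter]
  -- main estimate
  have hmain : |∑ v ∈ T, M.mulVec x v| ≤ P * Real.sqrt ((S.card : ℝ) * T.card) := by
    rw [hdev]
    set y : Fin n → ℝ := fun v => (if v ∈ T then (1:ℝ) else 0) - d with hydef
    have hCS : |∑ v, y v * M.mulVec x v|
        ≤ Real.sqrt (∑ v, (y v)^2) * Real.sqrt (∑ v, (M.mulVec x v)^2) := by
      rw [← Real.sqrt_sq_eq_abs, ← Real.sqrt_mul (Finset.sum_nonneg
        (fun v _ => sq_nonneg _))]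
      exact Real.sqrt_le_sqrt (Finset.sum_mul_sq_le_sq_mul_sq _ _ _)
    refine hCS.trans ?_
    have hy : Real.sqrt (∑ v, (y v)^2) ≤ Real.sqrt (T.card : ℝ) :=
      Real.sqrt_le_sqrt (ind_center_sq_sum_le hn T)
    have hx2 : Real.sqrt (∑ u, (x u)^2) ≤ Real.sqrt (S.card : ℝ) :=
      Real.sqrt_le_sqrt (ind_center_sq_sum_le hn S)
    calc Real.sqrt (∑ v, (y v)^2) * Real.sqrt (∑ v, (M.mulVec x v)^2)
        ≤ Real.sqrt (T.card : ℝ) * (P * Real.sqrt (∑ u, (x u)^2)) := by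
          apply mul_le_mul hy hMnorm (Real.sqrt_nonneg _) (Real.sqrt_nonneg _)
      _ ≤ Real.sqrt (T.card : ℝ) * (P * Real.sqrt (S.card : ℝ)) := by
          apply mul_le_mul_of_nonneg_left
            (mul_le_mul_of_nonneg_left hx2 hPnn) (Real.sqrt_nonneg _)
      _ = P * Real.sqrt ((S.card : ℝ) * T.card) := by
          rw [Real.sqrt_mul (by positivity)]
          ring
  -- finish
  have hfinal : (∑ v ∈ T, ∑ u ∈ S, M v u) - PD * S.card * T.card / n
      = ∑ v ∈ T, M.mulVec x v := by
    rw [hsum_eq, hc]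
    field_simp
    ring
  rw [hfinal]
  exact hmain
end

section
/- Theorem 1 of the paper (Sensitivity of X-Nets, spectral form, distinct layers). Let n be a positive integer, and for i = 1,…,t let Aᵢ be an n×n real matrix with entries in {0,1} that is Dᵢ-biregular and has second singular value at most λᵢ. If n·∏ᵢ λᵢ < ∏ᵢ Dᵢ, then every entry of the product A_t ⋯ A_1 is strictly positive; that is, for every input node u and every output node v there is a path of length t from u to v through the network, so every output neuron is sensitive to every input neuron. -/
/-- Theorem 1 of the paper (Sensitivity of X-Nets, spectral form, distinct layers): if
each layer matrix `A i` (i = 1,…,t) is a 0/1, `D i`-biregular n×n matrix with second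
singular value at most `lam i`, and `n·∏ᵢ lamᵢ < ∏ᵢ Dᵢ`, then every entry of the
product `A_t ⋯ A_1` is strictly positive: every output neuron is sensitive to every
input neuron. -/
theorem sensitivity_of_xnets_spectral
    (n t : ℕ) (hn : 0 < n)
    (A : ℕ → Matrix (Fin n) (Fin n) ℝ) (D : ℕ → ℕ) (lam : ℕ → ℝ)
    (hD : ∀ i, 1 ≤ i → i ≤ t → 0 < D i)
    (hlam : ∀ i, 1 ≤ i → i ≤ t → 0 ≤ lam i)
    (hA01 : ∀ i, 1 ≤ i → i ≤ t → ∀ v u, A i v u = 0 ∨ A i v u = 1)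
    (hrow : ∀ i, 1 ≤ i → i ≤ t → ∀ v, ∑ u, A i v u = D i)
    (hcol : ∀ i, 1 ≤ i → i ≤ t → ∀ u, ∑ v, A i v u = D i)
    (hsv : ∀ i, 1 ≤ i → i ≤ t → ∀ x : Fin n → ℝ, (∑ j, x j) = 0 →
      Real.sqrt (∑ j, ((A i).mulVec x j) ^ 2) ≤ lam i * Real.sqrt (∑ j, (x j) ^ 2))
    (hgap : (n : ℝ) * ∏ i ∈ Finset.Icc 1 t, lam i < ∏ i ∈ Finset.Icc 1 t, (D i : ℝ)) :
    ∀ v u, 0 < layerProd A t v u := by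
  intro v u
  have hn' : (0:ℝ) < n := by exact_mod_cast hn
  -- sum preservation for mean-zero vectors
  have hsum0 : ∀ k, k ≤ t → ∀ x : Fin n → ℝ, (∑ j, x j) = 0 →
      (∑ j, (layerProd A k).mulVec x j) = 0 := by
    intro k
    induction k with
    | zero =>
      intro _ x hx
      simpa [layerProd] using hx
    | succ k ih =>
      intro hk x hx
      have hk' : k ≤ t := Nat.le_of_succ_le hk
      have h1 := ih hk' x hx
      have hmv : (layerProd A (k+1)).mulVec x
          = (A (k+1)).mulVec ((layerProd A k).mulVec x) := by
        simp [layerProd, Matrix.mulVec_mulVec]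
      rw [hmv]
      set y := (layerProd A k).mulVec x with hy
      have : ∑ j, (A (k+1)).mulVec y j = ∑ i, (∑ j, A (k+1) j i) * y i := by
        simp only [Matrix.mulVec, dotProduct, Finset.sum_mul]
        rw [Finset.sum_comm]
      rw [this]
      have : ∑ i, (∑ j, A (k+1) j i) * y i = (D (k+1) : ℝ) * ∑ i, y i := by
        rw [Finset.mul_sum]
        refine Finset.sum_congr rfl ?_
        intro i _
        rw [hcol (k+1) (Nat.succ_le_succ (Nat.zero_le k)) hk i]
      rw [this, h1, mul_zero]
  -- norm contraction
  have hnorm : ∀ k, k ≤ t → ∀ x : Fin n → ℝ, (∑ j, x j) = 0 →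
      Real.sqrt (∑ j, ((layerProd A k).mulVec x j) ^ 2)
        ≤ (∏ i ∈ Finset.Icc 1 k, lam i) * Real.sqrt (∑ j, (x j) ^ 2) := by
    intro k
    induction k with
    | zero =>
      intro _ x hx
      simp [layerProd]
    | succ k ih =>
      intro hk x hx
      have hk' : k ≤ t := Nat.le_of_succ_le hk
      have hmv : (layerProd A (k+1)).mulVec x
          = (A (k+1)).mulVec ((layerProd A k).mulVec x) := by
        simp [layerProd, Matrix.mulVec_mulVec]
      rw [hmv]
      set y := (layerProd A k).mulVec x with hy
      have hysum : (∑ j, y j) = 0 := hsum0 k hk' x hx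
      have h1 := hsv (k+1) (Nat.succ_le_succ (Nat.zero_le k)) hk y hysum
      have h2 := ih hk' x hx
      have hlam1 : 0 ≤ lam (k+1) := hlam (k+1) (Nat.succ_le_succ (Nat.zero_le k)) hk
      have hprod : (∏ i ∈ Finset.Icc 1 (k+1), lam i)
          = (∏ i ∈ Finset.Icc 1 k, lam i) * lam (k+1) := by
        rw [Finset.prod_Icc_succ_top (Nat.succ_le_succ (Nat.zero_le k))]
      rw [hprod]
      calc Real.sqrt (∑ j, ((A (k+1)).mulVec y j) ^ 2)
          ≤ lam (k+1) * Real.sqrt (∑ j, (y j) ^ 2) := h1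
        _ ≤ lam (k+1) * ((∏ i ∈ Finset.Icc 1 k, lam i) * Real.sqrt (∑ j, (x j) ^ 2)) :=
            mul_le_mul_of_nonneg_left h2 hlam1
        _ = (∏ i ∈ Finset.Icc 1 k, lam i) * lam (k+1) * Real.sqrt (∑ j, (x j) ^ 2) := by ring
  -- action on constant vectors
  have hone : ∀ k, k ≤ t → ∀ j, (layerProd A k).mulVec (fun _ => (1:ℝ)) j
      = ∏ i ∈ Finset.Icc 1 k, (D i : ℝ) := by
    intro k
    induction k with
    | zero =>
      intro _ j
      simp [layerProd, Matrix.mulVec, dotProduct, Matrix.one_apply,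
        Finset.sum_ite_eq]
    | succ k ih =>
      intro hk j
      have hk' : k ≤ t := Nat.le_of_succ_le hk
      have hmv : (layerProd A (k+1)).mulVec (fun _ => (1:ℝ))
          = (A (k+1)).mulVec ((layerProd A k).mulVec (fun _ => (1:ℝ))) := by
        simp [layerProd, Matrix.mulVec_mulVec]
      rw [hmv]
      have hconst : (layerProd A k).mulVec (fun _ => (1:ℝ))
          = fun _ => ∏ i ∈ Finset.Icc 1 k, (D i : ℝ) := by
        funext j'; exact ih hk' j'
      rw [hconst]
      have : (A (k+1)).mulVec (fun _ => ∏ i ∈ Finset.Icc 1 k, (D i : ℝ)) j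
          = (∑ i, A (k+1) j i) * ∏ i ∈ Finset.Icc 1 k, (D i : ℝ) := by
        simp [Matrix.mulVec, dotProduct, Finset.sum_mul]
      rw [this, hrow (k+1) (Nat.succ_le_succ (Nat.zero_le k)) hk j,
        Finset.prod_Icc_succ_top (Nat.succ_le_succ (Nat.zero_le k))]
      ring
  -- decomposition of the indicator vector
  set e : Fin n → ℝ := fun j => if j = u then 1 else 0 with he
  set x : Fin n → ℝ := fun j => e j - 1/n with hx
  have hxsum : (∑ j, x j) = 0 := by
    simp only [hx, he]
    rw [Finset.sum_sub_distrib]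
    simp [Finset.sum_ite_eq', Finset.card_univ]
    field_simp
    norm_num
  have hentry : layerProd A t v u = (layerProd A t).mulVec e v := by
    simp only [Matrix.mulVec, dotProduct, he, mul_ite, mul_one, mul_zero]
    rw [Finset.sum_ite_eq' Finset.univ u (fun i => layerProd A t v i)]
    simp
  have hdecomp : (layerProd A t).mulVec e v
      = (layerProd A t).mulVec x v + (1/n) * ∏ i ∈ Finset.Icc 1 t, (D i : ℝ) := by
    have : e = x + (1/(n:ℝ)) • (fun _ => (1:ℝ)) := by
      funext j; simp [hx, Pi.add_apply]
    rw [this, Matrix.mulVec_add, Matrix.mulVec_smul]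
    simp [hone t le_rfl v]
  have hx2 : (∑ j, (x j) ^ 2) ≤ 1 := by
    have hexp : ∀ j, (x j) ^ 2 = (e j)^2 - 2*(1/n)*(e j) + (1/n)^2 := by
      intro j; simp only [hx]; ring
    rw [Finset.sum_congr rfl (fun j _ => hexp j)]
    rw [Finset.sum_add_distrib, Finset.sum_sub_distrib]
    have h1 : ∑ j, (e j)^2 = 1 := by
      simp [he, ite_pow, Finset.sum_ite_eq']
    have h2 : ∑ j, 2*(1/(n:ℝ))*(e j) = 2/n := by
      rw [← Finset.mul_sum]
      simp [he, Finset.sum_ite_eq']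
      ring
    have h3 : ∑ _j : Fin n, (1/(n:ℝ))^2 = 1/(n:ℝ) := by
      rw [Finset.sum_const, Finset.card_univ, Fintype.card_fin]
      field_simp
      ring_nf
      field_simp
    rw [h1, h2, h3]
    have h4 : (0:ℝ) < 1/n := by positivity
    have h5 : (2:ℝ)/n = 2*(1/n) := by ring
    linarith
  have hlamprod : 0 ≤ ∏ i ∈ Finset.Icc 1 t, lam i := by
    apply Finset.prod_nonneg
    intro i hi
    rw [Finset.mem_Icc] at hi
    exact hlam i hi.1 hi.2
  have hbound : |(layerProd A t).mulVec x v| ≤ ∏ i ∈ Finset.Icc 1 t, lam i := by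
    have h1 : |(layerProd A t).mulVec x v|
        ≤ Real.sqrt (∑ j, ((layerProd A t).mulVec x j) ^ 2) := by
      rw [← Real.sqrt_sq_eq_abs]
      apply Real.sqrt_le_sqrt
      exact Finset.single_le_sum (f := fun j => ((layerProd A t).mulVec x j)^2)
        (fun j _ => sq_nonneg _) (Finset.mem_univ v)
    have h2 := hnorm t le_rfl x hxsum
    have h3 : Real.sqrt (∑ j, (x j) ^ 2) ≤ 1 := by
      rw [show (1:ℝ) = Real.sqrt 1 by simp]
      exact Real.sqrt_le_sqrt hx2
    calc |(layerProd A t).mulVec x v|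
        ≤ Real.sqrt (∑ j, ((layerProd A t).mulVec x j) ^ 2) := h1
      _ ≤ (∏ i ∈ Finset.Icc 1 t, lam i) * Real.sqrt (∑ j, (x j) ^ 2) := h2
      _ ≤ (∏ i ∈ Finset.Icc 1 t, lam i) * 1 := mul_le_mul_of_nonneg_left h3 hlamprod
      _ = _ := mul_one _
  rw [hentry, hdecomp]
  have hgap' : (∏ i ∈ Finset.Icc 1 t, lam i) < (1/n) * ∏ i ∈ Finset.Icc 1 t, (D i : ℝ) := by
    rw [div_mul_eq_mul_div, one_mul, lt_div_iff₀ hn']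
    linarith [hgap]
  have := abs_le.mp hbound
  linarith [this.1]
end

section
/- Theorem 1 of the paper (Sensitivity of X-Nets at logarithmic depth, spectral form). Let n, D be positive integers and 0 < λ < D real numbers. Let A be an n×n real matrix with entries in {0,1} that is D-biregular and has second singular value at most λ. Then for every natural number t satisfying t > Real.log n / Real.log (D/λ), every entry of Aᵗ is strictly positive; in particular, in a network of depth t = O(log n) whose layers are all given by A, every output neuron is sensitive to every input neuron. -/
lemma xnet_rowsum (n D : ℕ) (A : Matrix (Fin n) (Fin n) ℝ)
    (hrow : ∀ v, ∑ u, A v u = D) (t : ℕ) :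
    ∀ v, ∑ j, (A ^ t) v j = (D : ℝ) ^ t := by
  induction t with
  | zero => intro v; simp [Matrix.one_apply]
  | succ t ih =>
    intro v
    rw [pow_succ']
    simp only [Matrix.mul_apply]
    rw [Finset.sum_comm]
    calc ∑ k, ∑ j, A v k * (A ^ t) k j
        = ∑ k, A v k * ((D:ℝ)^t) := by
          refine Finset.sum_congr rfl fun k _ => ?_
          rw [← Finset.mul_sum, ih k]
      _ = (D:ℝ) ^ (t+1) := by
          rw [← Finset.sum_mul, hrow v]; ring

lemma xnet_contract (n : ℕ) (D : ℕ) (lam : ℝ) (hlam0 : 0 ≤ lam)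
    (A : Matrix (Fin n) (Fin n) ℝ)
    (hcol : ∀ u, ∑ v, A v u = D)
    (hsv : ∀ x : Fin n → ℝ, (∑ i, x i) = 0 →
      Real.sqrt (∑ i, (A.mulVec x i) ^ 2) ≤ lam * Real.sqrt (∑ i, (x i) ^ 2))
    (t : ℕ) :
    ∀ x : Fin n → ℝ, (∑ i, x i) = 0 →
      (∑ i, (A ^ t).mulVec x i) = 0 ∧
      Real.sqrt (∑ i, ((A ^ t).mulVec x i) ^ 2) ≤ lam ^ t * Real.sqrt (∑ i, (x i) ^ 2) := by
  induction t with
  | zero => intro x hx; simp [Matrix.one_mulVec, hx]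
  | succ t ih =>
    intro x hx
    obtain ⟨hsum, hbd⟩ := ih x hx
    have hmv : (A ^ (t+1)).mulVec x = A.mulVec ((A ^ t).mulVec x) := by
      rw [pow_succ', Matrix.mulVec_mulVec]
    constructor
    · rw [hmv]
      have : ∑ v, A.mulVec ((A ^ t).mulVec x) v
          = ∑ u, (∑ v, A v u) * ((A ^ t).mulVec x u) := by
        simp only [Matrix.mulVec, dotProduct]
        rw [Finset.sum_comm]
        simp [Finset.sum_mul]
      rw [this]
      simp only [hcol]
      rw [← Finset.mul_sum, hsum, mul_zero]
    · rw [hmv]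
      calc Real.sqrt (∑ i, (A.mulVec ((A ^ t).mulVec x) i) ^ 2)
          ≤ lam * Real.sqrt (∑ i, ((A ^ t).mulVec x i) ^ 2) := hsv _ hsum
        _ ≤ lam * (lam ^ t * Real.sqrt (∑ i, (x i) ^ 2)) := by
            exact mul_le_mul_of_nonneg_left hbd hlam0
        _ = lam ^ (t+1) * Real.sqrt (∑ i, (x i) ^ 2) := by ring

/-- Theorem 1 of the paper (Sensitivity of X-Nets at logarithmic depth, spectral form):
for a 0/1, D-biregular n×n matrix `A` with second singular value at most `lam`, where
`0 < lam < D`, and every natural number `t > log n / log (D/lam)`, every entry of `Aᵗ`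
is strictly positive: every output neuron of the depth-t network is sensitive to every
input neuron. -/
theorem sensitivity_of_xnets_log_depth
    (n D : ℕ) (hn : 0 < n) (hD : 0 < D) (lam : ℝ)
    (hlam0 : 0 < lam) (hlamD : lam < D)
    (A : Matrix (Fin n) (Fin n) ℝ)
    (hA01 : ∀ v u, A v u = 0 ∨ A v u = 1)
    (hrow : ∀ v, ∑ u, A v u = D)
    (hcol : ∀ u, ∑ v, A v u = D)
    (hsv : ∀ x : Fin n → ℝ, (∑ i, x i) = 0 →
      Real.sqrt (∑ i, (A.mulVec x i) ^ 2) ≤ lam * Real.sqrt (∑ i, (x i) ^ 2))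
    (t : ℕ) (ht : Real.log n / Real.log ((D : ℝ) / lam) < (t : ℝ)) :
    ∀ v u, 0 < (A ^ t) v u := by
  intro v u
  have hn' : (0:ℝ) < n := by exact_mod_cast hn
  -- spectral gap: n * lam^t < D^t
  have hratio : (1:ℝ) < (D:ℝ) / lam := (one_lt_div hlam0).mpr hlamD
  have hlog : 0 < Real.log ((D:ℝ) / lam) := Real.log_pos hratio
  have hlt : Real.log n < t * Real.log ((D:ℝ)/lam) := by
    rw [div_lt_iff₀ hlog] at ht; linarith
  have hnlt : (n:ℝ) < ((D:ℝ)/lam) ^ t := by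
    have h2 : Real.log n < Real.log (((D:ℝ)/lam) ^ t) := by
      rw [Real.log_pow]; exact_mod_cast hlt
    have := Real.exp_lt_exp.mpr h2
    rwa [Real.exp_log hn', Real.exp_log (pow_pos (by linarith) t)] at this
  have hkey : (n:ℝ) * lam ^ t < (D:ℝ) ^ t := by
    have := (mul_lt_mul_of_pos_right hnlt (pow_pos hlam0 t))
    rwa [div_pow, div_mul_cancel₀] at this
    exact pow_ne_zero _ (ne_of_gt hlam0)
  -- decompose e_u
  set x : Fin n → ℝ := fun j => (if j = u then (1:ℝ) else 0) - 1 / n with hxdef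
  have hxsum : ∑ i, x i = 0 := by
    simp [hxdef, Finset.sum_sub_distrib, Finset.sum_ite_eq, Finset.card_univ]
    field_simp; norm_num
  have hxsq : ∑ i, (x i) ^ 2 ≤ 1 := by
    have hstep : ∀ i, (x i)^2 = (if i = u then (1 - 2/(n:ℝ)) else 0) + 1/(n:ℝ)^2 := by
      intro i
      by_cases h : i = u <;> simp [hxdef, h] <;> ring
    rw [Finset.sum_congr rfl (fun i _ => hstep i), Finset.sum_add_distrib,
      Finset.sum_ite_eq', Finset.sum_const, Finset.card_univ]
    simp only [Finset.mem_univ, if_true, Fintype.card_fin, nsmul_eq_mul]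
    have h1 : (n:ℝ) * (1/(n:ℝ)^2) = 1/n := by field_simp
    have h2 : (0:ℝ) ≤ 1/n := by positivity
    have h3 : 2/(n:ℝ) = 2*(1/n) := by ring
    rw [h1]; linarith
  obtain ⟨_, hbd⟩ := xnet_contract n D lam (le_of_lt hlam0) A hcol hsv t x hxsum
  -- entry formula
  have hentry : (A ^ t).mulVec x v = (A ^ t) v u - (D:ℝ)^t / n := by
    simp only [Matrix.mulVec, dotProduct, hxdef]
    have hterm : ∀ j, (A^t) v j * ((if j = u then (1:ℝ) else 0) - 1/n)
        = (if j = u then (A^t) v u else 0) - (A^t) v j * (1/n) := by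
      intro j; by_cases h : j = u <;> simp [h] <;> ring
    rw [Finset.sum_congr rfl (fun j _ => hterm j), Finset.sum_sub_distrib,
      Finset.sum_ite_eq', ← Finset.sum_mul, xnet_rowsum n D A hrow t]
    simp only [Finset.mem_univ, if_true]
    ring
  have habs : |(A ^ t).mulVec x v| ≤ lam ^ t := by
    have h1 : |(A ^ t).mulVec x v| ≤ Real.sqrt (∑ i, ((A ^ t).mulVec x i) ^ 2) := by
      rw [← Real.sqrt_sq_eq_abs]
      apply Real.sqrt_le_sqrt
      exact Finset.single_le_sum (f := fun i => ((A ^ t).mulVec x i)^2) (fun i _ => sq_nonneg _) (Finset.mem_univ v)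
    have h2 : Real.sqrt (∑ i, (x i) ^ 2) ≤ 1 := by
      rw [show (1:ℝ) = Real.sqrt 1 by simp]
      exact Real.sqrt_le_sqrt hxsq
    calc |(A ^ t).mulVec x v| ≤ lam ^ t * Real.sqrt (∑ i, (x i) ^ 2) := le_trans h1 hbd
      _ ≤ lam ^ t * 1 := mul_le_mul_of_nonneg_left h2 (pow_nonneg hlam0.le t)
      _ = lam ^ t := mul_one _
  have := abs_le.mp habs
  have hlow : -(lam ^ t) ≤ (A ^ t) v u - (D:ℝ)^t / n := by rw [← hentry]; exact this.1
  have hDn : lam ^ t < (D:ℝ)^t / n := by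
    rw [lt_div_iff₀ hn']; linarith [hkey]
  linarith
end

section
/- Theorem 1 of the paper (Sensitivity of X-Nets, combinatorial form). Let n be an even positive integer and γ > 0. For k = 1,…,t, let G_k ⊆ Fin n × Fin n be a bipartite layer graph such that both G_k and its reverse {(v,u) : (u,v) ∈ G_k} have vertex expansion factor (1+γ): for every S ⊆ Fin n with 2·|S| ≤ n, both |N_{G_k}(S)| ≥ (1+γ)·|S| and |N_{G_k⁻¹}(S)| ≥ (1+γ)·|S|. Suppose t = i + j for natural numbers i, j with (1+γ)^i > n/2 and (1+γ)^j > n/2 (so t = O(log n) suffices). Then for every input node u and every output node v there exist nodes w_0 = u, w_1, …, w_t = v with (w_{k−1}, w_k) ∈ G_k for each k = 1,…,t; that is, every output neuron of the t-layer X-Net is sensitive to every input neuron. -/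
/-- The neighborhood of a set `S` of input nodes in a bipartite layer graph
`G ⊆ Fin n × Fin n`. -/
def layerNbhd {n : ℕ} (G : Set (Fin n × Fin n)) (S : Set (Fin n)) : Set (Fin n) :=
  {v | ∃ u ∈ S, (u, v) ∈ G}

/-- The reverse of a bipartite layer graph. -/
def layerRev {n : ℕ} (G : Set (Fin n × Fin n)) : Set (Fin n × Fin n) :=
  {p | (p.2, p.1) ∈ G}

lemma layerNbhd_mono {n : ℕ} (G : Set (Fin n × Fin n)) {S T : Set (Fin n)}
    (h : S ⊆ T) : layerNbhd G S ⊆ layerNbhd G T := by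
  rintro x ⟨u, hu, hG⟩
  exact ⟨u, h hu, hG⟩

/-- Growth lemma: iterating expanding layers from a singleton, the reachable set
either has size at least `(1+γ)^k` or more than half the vertices. -/
lemma xnet_grow (n : ℕ) (hn : 0 < n) (heven : Even n) (γ : ℝ) (hγ : 0 < γ)
    (H : ℕ → Set (Fin n × Fin n)) (m : ℕ)
    (hexp : ∀ k < m, ∀ S : Set (Fin n), 2 * S.ncard ≤ n →
      (1 + γ) * S.ncard ≤ (layerNbhd (H k) S).ncard)
    (R : ℕ → Set (Fin n)) (h0 : (R 0).ncard = 1)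
    (hstep : ∀ k, R (k + 1) = layerNbhd (H k) (R k)) :
    ∀ k ≤ m, ((1 + γ) ^ k ≤ ((R k).ncard : ℝ) ∨ n < 2 * (R k).ncard) := by
  intro k
  induction k with
  | zero => intro _; left; simp [h0]
  | succ k ih =>
    intro hk
    have hk' : k ≤ m := Nat.le_of_succ_le hk
    have hkm : k < m := hk
    have h1γ : (0 : ℝ) < 1 + γ := by linarith
    rcases ih hk' with hle | hbig
    · by_cases hhalf : 2 * (R k).ncard ≤ n
      · left
        have := hexp k hkm (R k) hhalf
        rw [← hstep k] at this
        calc (1 + γ) ^ (k + 1) = (1 + γ) * (1 + γ) ^ k := by ring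
          _ ≤ (1 + γ) * (R k).ncard := by
              exact mul_le_mul_of_nonneg_left hle (le_of_lt h1γ)
          _ ≤ ((R (k + 1)).ncard : ℝ) := this
      · -- R k already has more than half; keep it big
        right
        push_neg at hhalf
        obtain ⟨h, hh⟩ := heven
        have hhn : n = 2 * h := by omega
        have hhpos : 0 < h := by omega
        have hhle : h ≤ (R k).ncard := by omega
        obtain ⟨S, hS, hScard⟩ := Set.exists_subset_card_eq hhle
        have hexpS := hexp k hkm S (by omega)
        have hsub : layerNbhd (H k) S ⊆ R (k + 1) := by
          rw [hstep k]; exact layerNbhd_mono _ hS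
        have hcard : (layerNbhd (H k) S).ncard ≤ (R (k + 1)).ncard :=
          Set.ncard_le_ncard hsub (Set.toFinite _)
        -- (1+γ) * h ≤ |R (k+1)|, and h < (1+γ) h
        have h1 : (h : ℝ) < (1 + γ) * h := by
          have : (0 : ℝ) < h := by exact_mod_cast hhpos
          nlinarith
        have h2 : ((h : ℝ)) < ((R (k + 1)).ncard : ℝ) := by
          rw [hScard] at hexpS
          have : ((layerNbhd (H k) S).ncard : ℝ) ≤ ((R (k + 1)).ncard : ℝ) := by
            exact_mod_cast hcard
          linarith
        have h3 : h < (R (k + 1)).ncard := by exact_mod_cast h2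
        omega
    · -- stays big, same subset argument
      right
      obtain ⟨h, hh⟩ := heven
      have hhn : n = 2 * h := by omega
      have hhpos : 0 < h := by omega
      have hhle : h ≤ (R k).ncard := by omega
      obtain ⟨S, hS, hScard⟩ := Set.exists_subset_card_eq hhle
      have hexpS := hexp k hkm S (by omega)
      have hsub : layerNbhd (H k) S ⊆ R (k + 1) := by
        rw [hstep k]; exact layerNbhd_mono _ hS
      have hcard : (layerNbhd (H k) S).ncard ≤ (R (k + 1)).ncard :=
        Set.ncard_le_ncard hsub (Set.toFinite _)
      have h1 : (h : ℝ) < (1 + γ) * h := by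
        have : (0 : ℝ) < h := by exact_mod_cast hhpos
        nlinarith
      have h2 : ((h : ℝ)) < ((R (k + 1)).ncard : ℝ) := by
        rw [hScard] at hexpS
        have : ((layerNbhd (H k) S).ncard : ℝ) ≤ ((R (k + 1)).ncard : ℝ) := by
          exact_mod_cast hcard
        linarith
      have h3 : h < (R (k + 1)).ncard := by exact_mod_cast h2
      omega

/-- Path extraction: membership in an iterated neighborhood gives an explicit path. -/
lemma xnet_path (n : ℕ) (H : ℕ → Set (Fin n × Fin n)) (u : Fin n)
    (R : ℕ → Set (Fin n)) (h0 : R 0 = {u})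
    (hstep : ∀ k, R (k + 1) = layerNbhd (H k) (R k)) :
    ∀ k, ∀ x ∈ R k, ∃ w : ℕ → Fin n, w 0 = u ∧ w k = x ∧
      ∀ p, 1 ≤ p → p ≤ k → (w (p - 1), w p) ∈ H (p - 1) := by
  intro k
  induction k with
  | zero =>
    intro x hx
    rw [h0] at hx
    refine ⟨fun _ => u, rfl, by simpa using hx.symm ▸ rfl, ?_⟩
    intro p hp1 hp0; omega
  | succ k ih =>
    intro x hx
    rw [hstep k] at hx
    obtain ⟨y, hy, hxy⟩ := hx
    obtain ⟨w, hw0, hwk, hwp⟩ := ih y hy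
    refine ⟨fun q => if q ≤ k then w q else x, by simp [hw0], by simp, ?_⟩
    intro p hp1 hpk
    by_cases hpc : p ≤ k
    · have : p - 1 ≤ k := by omega
      simpa [hpc, this] using hwp p hp1 hpc
    · have hpe : p = k + 1 := by omega
      have h1 : p - 1 ≤ k := by omega
      have h2 : ¬ p ≤ k := hpc
      simp only [h1, h2, if_true, if_false]
      have : p - 1 = k := by omega
      rw [this, hwk]
      exact hxy

lemma xnet_inter_nonempty {n : ℕ} (A C : Set (Fin n)) (hA : n < 2 * A.ncard)
    (hC : n < 2 * C.ncard) : (A ∩ C).Nonempty := by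
  have hunion : (A ∪ C).ncard ≤ n := by
    have := Set.ncard_le_ncard (Set.subset_univ (A ∪ C)) (Set.toFinite _)
    simpa [Set.ncard_univ] using this
  have hsum := Set.ncard_union_add_ncard_inter A C (Set.toFinite A) (Set.toFinite C)
  exact Set.nonempty_of_ncard_ne_zero (by omega)

/-- Theorem 1 of the paper (Sensitivity of X-Nets, combinatorial form): `n` even and
positive, `γ > 0`, and each layer graph `G k` (k = 1,…,t) together with its reverse has
vertex expansion factor `(1+γ)` on sets of size at most n/2. If `t = i + j` with
`(1+γ)^i > n/2` and `(1+γ)^j > n/2` (so `t = O(log n)` suffices), then for every input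
node `u` and output node `v` there is a path `w 0 = u, w 1, …, w t = v` through the
network with `(w (k-1), w k) ∈ G k` for `k = 1,…,t`: every output neuron of the
t-layer X-Net is sensitive to every input neuron. -/
theorem sensitivity_of_xnets_combinatorial
    (n : ℕ) (hn : 0 < n) (heven : Even n) (γ : ℝ) (hγ : 0 < γ)
    (t : ℕ) (G : ℕ → Set (Fin n × Fin n))
    (hexp : ∀ k, 1 ≤ k → k ≤ t → ∀ S : Set (Fin n), 2 * S.ncard ≤ n →
      (1 + γ) * S.ncard ≤ (layerNbhd (G k) S).ncard)
    (hexpRev : ∀ k, 1 ≤ k → k ≤ t → ∀ S : Set (Fin n), 2 * S.ncard ≤ n →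
      (1 + γ) * S.ncard ≤ (layerNbhd (layerRev (G k)) S).ncard)
    (i j : ℕ) (hij : t = i + j)
    (hi : (n : ℝ) / 2 < (1 + γ) ^ i) (hj : (n : ℝ) / 2 < (1 + γ) ^ j)
    (u v : Fin n) :
    ∃ w : ℕ → Fin n, w 0 = u ∧ w t = v ∧
      ∀ k, 1 ≤ k → k ≤ t → (w (k - 1), w k) ∈ G k := by
  classical
  -- forward reachable sets
  set HF : ℕ → Set (Fin n × Fin n) := fun k => G (k + 1) with hHF
  set HB : ℕ → Set (Fin n × Fin n) := fun k => layerRev (G (t - k)) with hHB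
  let R : ℕ → Set (Fin n) := fun k => Nat.rec ({u} : Set (Fin n))
    (fun k Rk => layerNbhd (HF k) Rk) k
  let B : ℕ → Set (Fin n) := fun k => Nat.rec ({v} : Set (Fin n))
    (fun k Bk => layerNbhd (HB k) Bk) k
  have hR0 : R 0 = {u} := rfl
  have hRstep : ∀ k, R (k + 1) = layerNbhd (HF k) (R k) := fun k => rfl
  have hB0 : B 0 = {v} := rfl
  have hBstep : ∀ k, B (k + 1) = layerNbhd (HB k) (B k) := fun k => rfl
  -- growth of forward sets
  have hgrowR := xnet_grow n hn heven γ hγ HF i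
    (fun k hk S hS => hexp (k + 1) (by omega) (by omega) S hS)
    R (by rw [hR0]; simp) hRstep
  have hgrowB := xnet_grow n hn heven γ hγ HB j
    (fun k hk S hS => hexpRev (t - k) (by omega) (by omega) S hS)
    B (by rw [hB0]; simp) hBstep
  have hbigR : n < 2 * (R i).ncard := by
    rcases hgrowR i le_rfl with hle | hbig
    · have : (n : ℝ) < 2 * (R i).ncard := by linarith
      exact_mod_cast this
    · exact hbig
  have hbigB : n < 2 * (B j).ncard := by
    rcases hgrowB j le_rfl with hle | hbig
    · have : (n : ℝ) < 2 * (B j).ncard := by linarith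
      exact_mod_cast this
    · exact hbig
  obtain ⟨x, hxR, hxB⟩ := xnet_inter_nonempty (R i) (B j) hbigR hbigB
  -- extract paths
  obtain ⟨w, hw0, hwi, hwp⟩ := xnet_path n HF u R hR0 hRstep i x hxR
  obtain ⟨z, hz0, hzj, hzp⟩ := xnet_path n HB v B hB0 hBstep j x hxB
  -- combine: W k = w k for k ≤ i, else z (t - k)
  refine ⟨fun k => if k ≤ i then w k else z (t - k), by simp [hw0], ?_, ?_⟩
  · by_cases hti : t ≤ i
    · have : t = i := by omega
      simp only [hti, if_true]
      rw [this, hwi]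
      have hj0 : j = 0 := by omega
      rw [hj0, hB0] at hxB
      exact hxB
    · have h1 : ¬ t ≤ i := hti
      simp only [h1, if_false]
      have : t - t = 0 := by omega
      rw [Nat.sub_self, hz0]
  · intro k hk1 hkt
    beta_reduce
    by_cases hki : k ≤ i
    · have h1 : k - 1 ≤ i := by omega
      rw [if_pos hki, if_pos h1]
      have := hwp k hk1 hki
      have hk' : k - 1 + 1 = k := by omega
      simpa [hHF, hk'] using this
    · -- k ≥ i + 1; edge from backward path
      push_neg at hki
      have hkj1 : 1 ≤ t - k + 1 := by omega
      have hkj2 : t - k + 1 ≤ j := by omega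
      have hedge := hzp (t - k + 1) hkj1 hkj2
      -- hedge : (z (t - k), z (t - k + 1)) ∈ HB (t - k) = layerRev (G (t - (t - k))) = layerRev (G k)
      have hGk : t - (t - k) = k := by omega
      have hedge' : (z (t - k + 1), z (t - k)) ∈ G k := by
        have : (z (t - k + 1 - 1), z (t - k + 1)) ∈ layerRev (G (t - (t - k + 1 - 1))) := hedge
        simp only [Nat.add_sub_cancel, hGk] at this
        exact this
      by_cases hki1 : k - 1 ≤ i
      · -- k = i + 1 : left end is w i = x = z j, right end z (t - k)
        have hke : k = i + 1 := by omega
        rw [if_pos hki1, if_neg (by omega : ¬ k ≤ i)]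
        have h1 : k - 1 = i := by omega
        have h2 : t - k + 1 = j := by omega
        rw [h1, hwi]
        rw [h2] at hedge'
        rw [hzj] at hedge'
        exact hedge'
      · rw [if_neg hki1, if_neg (by omega : ¬ k ≤ i)]
        have h3 : t - (k - 1) = t - k + 1 := by omega
        rw [h3]
        exact hedge'
end
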